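/- Let X be a real Banach space and ε ∈ (0,2). If x₀* ∈ s_ε B_{X*}, then θ·x₀* ∈ s_ε B_{X*} for every θ ∈ (0,1). -/

import Mathlib

open Filter Topology Metric

/-- The ε-Szlenk derivation of the closed dual unit ball of `X`: the set of functionals
`x* ∈ B_{X*}` such that every weak*-open set containing `x*` meets `B_{X*}` in a set of
norm-diameter strictly greater than `ε`. -/
def szlenkDeriv (X : Type*) [NormedAddCommGroup X] [NormedSpace ℝ X] (ε : ℝ) :
    Set (StrongDual ℝ X) :=
  {x : StrongDual ℝ X | ‖x‖ ≤ 1 ∧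
    ∀ V : Set (StrongDual ℝ X),
      IsOpen ((StrongDual.toWeakDual '' V : Set (WeakDual ℝ X))) → x ∈ V →
        ε < Metric.diam (Metric.closedBall (0 : StrongDual ℝ X) 1 ∩ V)}

theorem szlenkDeriv_smul_mem (X : Type*) [NormedAddCommGroup X] [NormedSpace ℝ X]
    [CompleteSpace X] (ε : ℝ) (hε : ε ∈ Set.Ioo (0 : ℝ) 2)
    (x₀ : StrongDual ℝ X) (hx₀ : x₀ ∈ szlenkDeriv X ε)
    (θ : ℝ) (hθ : θ ∈ Set.Ioo (0 : ℝ) 1) :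
    θ • x₀ ∈ szlenkDeriv X ε := by
  obtain ⟨hx₀n, hx₀s⟩ := hx₀
  obtain ⟨hθ0, hθ1⟩ := hθ
  constructor
  · calc ‖θ • x₀‖ = |θ| * ‖x₀‖ := norm_smul θ x₀
    _ ≤ 1 * 1 := by
        apply mul_le_mul _ hx₀n (norm_nonneg _) zero_le_one
        rw [abs_of_pos hθ0]; exact hθ1.le
    _ = 1 := one_mul 1
  intro V hV hmem
  set α : ℝ := (1 + θ) / 2 with hα
  set β : ℝ := (1 - θ) / 2 with hβ
  have hαpos : 0 ≤ α := by positivity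
  have hβpos : 0 ≤ β := by rw [hβ]; linarith
  have hαβ : α + β = 1 := by rw [hα, hβ]; ring
  have hαβ' : α - β = θ := by rw [hα, hβ]; ring
  -- the continuous map Φ on the weak* dual
  set Φ : WeakDual ℝ X × WeakDual ℝ X → WeakDual ℝ X :=
    fun p => α • p.1 - β • p.2 with hΦ
  have hΦc : Continuous Φ := by
    apply Continuous.sub
    · exact (continuous_fst.const_smul α)
    · exact (continuous_snd.const_smul β)
  have hopen : IsOpen (Φ ⁻¹' (StrongDual.toWeakDual '' V)) := hV.preimage hΦc
  set w₀ : WeakDual ℝ X := StrongDual.toWeakDual x₀ with hw₀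
  have hmem' : (w₀, w₀) ∈ Φ ⁻¹' (StrongDual.toWeakDual '' V) := by
    have : Φ (w₀, w₀) = StrongDual.toWeakDual (θ • x₀) := by
      show α • w₀ - β • w₀ = _
      rw [hw₀]
      rw [← sub_smul, hαβ']
      rfl
    rw [Set.mem_preimage, this]
    exact Set.mem_image_of_mem _ hmem
  rw [isOpen_prod_iff] at hopen
  obtain ⟨U₁, U₂, hU₁, hU₂, hw₁, hw₂, hsub⟩ := hopen w₀ w₀ hmem'
  set U : Set (StrongDual ℝ X) := StrongDual.toWeakDual ⁻¹' (U₁ ∩ U₂) with hU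
  have hUopen : IsOpen ((StrongDual.toWeakDual '' U : Set (WeakDual ℝ X))) := by
    rw [hU, Set.image_preimage_eq _ (StrongDual.toWeakDual (𝕜 := ℝ) (E := X)).surjective]
    exact hU₁.inter hU₂
  have hdiam : ε < Metric.diam (Metric.closedBall (0 : StrongDual ℝ X) 1 ∩ U) :=
    hx₀s U hUopen ⟨hw₁, hw₂⟩
  -- extract two far-apart points
  have hbdd : Bornology.IsBounded (Metric.closedBall (0 : StrongDual ℝ X) 1 ∩ U) :=
    (Metric.isBounded_closedBall).subset Set.inter_subset_left
  obtain ⟨a, ha, b, hb, hab⟩ :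
      ∃ a ∈ Metric.closedBall (0 : StrongDual ℝ X) 1 ∩ U,
        ∃ b ∈ Metric.closedBall (0 : StrongDual ℝ X) 1 ∩ U, ε < dist a b := by
    by_contra h
    push_neg at h
    exact absurd (Metric.diam_le_of_forall_dist_le hε.1.le h) (not_le.mpr hdiam)
  obtain ⟨haB, haU⟩ := ha
  obtain ⟨hbB, hbU⟩ := hb
  -- build the two points in B ∩ V
  set c : StrongDual ℝ X := α • a - β • b with hc
  set d : StrongDual ℝ X := α • b - β • a with hd
  have hnorm : ∀ u v : StrongDual ℝ X, ‖u‖ ≤ 1 → ‖v‖ ≤ 1 → ‖α • u - β • v‖ ≤ 1 := by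
    intro u v hu hv
    calc ‖α • u - β • v‖ ≤ ‖α • u‖ + ‖β • v‖ := norm_sub_le _ _
      _ = |α| * ‖u‖ + |β| * ‖v‖ := by rw [norm_smul, norm_smul]; rfl
      _ = α * ‖u‖ + β * ‖v‖ := by rw [abs_of_nonneg hαpos, abs_of_nonneg hβpos]
      _ ≤ α * 1 + β * 1 := by
          gcongr
      _ = 1 := by rw [mul_one, mul_one, hαβ]
  have haB' : ‖a‖ ≤ 1 := by rwa [Metric.mem_closedBall, dist_zero_right] at haB
  have hbB' : ‖b‖ ≤ 1 := by rwa [Metric.mem_closedBall, dist_zero_right] at hbB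
  have hcB : c ∈ Metric.closedBall (0 : StrongDual ℝ X) 1 := by
    rw [Metric.mem_closedBall, dist_zero_right]; exact hnorm a b haB' hbB'
  have hdB : d ∈ Metric.closedBall (0 : StrongDual ℝ X) 1 := by
    rw [Metric.mem_closedBall, dist_zero_right]; exact hnorm b a hbB' haB'
  have hmemV : ∀ u v : StrongDual ℝ X, u ∈ U → v ∈ U → (α • u - β • v) ∈ V := by
    intro u v hu hv
    have h1 : (StrongDual.toWeakDual u, StrongDual.toWeakDual v) ∈ U₁ ×ˢ U₂ :=
      ⟨hu.1, hv.2⟩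
    have h2 := hsub h1
    rw [Set.mem_preimage] at h2
    have h3 : Φ (StrongDual.toWeakDual u, StrongDual.toWeakDual v)
        = StrongDual.toWeakDual (α • u - β • v) := by
      show α • (StrongDual.toWeakDual u) - β • (StrongDual.toWeakDual v) = _
      rw [map_sub, map_smul, map_smul]
    rw [h3] at h2
    obtain ⟨w, hwV, hwe⟩ := h2
    rw [StrongDual.toWeakDual_inj] at hwe
    exact hwe ▸ hwV
  have hcV : c ∈ V := hmemV a b haU hbU
  have hdV : d ∈ V := hmemV b a hbU haU
  have hcd : c - d = a - b := by rw [hc, hd]; module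
  have hdist : dist c d = dist a b := by
    rw [dist_eq_norm, dist_eq_norm, hcd]
  have hbddV : Bornology.IsBounded (Metric.closedBall (0 : StrongDual ℝ X) 1 ∩ V) :=
    (Metric.isBounded_closedBall).subset Set.inter_subset_left
  calc ε < dist a b := hab
    _ = dist c d := hdist.symm
    _ ≤ Metric.diam (Metric.closedBall (0 : StrongDual ℝ X) 1 ∩ V) :=
        Metric.dist_le_diam_of_mem hbddV ⟨hcB, hcV⟩ ⟨hdB, hdV⟩
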